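/- Let Y be a non-degenerate metric continuum containing an open subset U such that U contains no arc, let L ⊆ U be a non-degenerate subcontinuum, δ = diam L, and ε = min{δ/2, dist(L, Y \ U)}. Then no continuous map q : Y × [0,1] → Y that is ε-close to the projection p(y,t) = y is a Krasinkiewicz map. -/

import Mathlib

def IsKrasMap {X M : Type*} [TopologicalSpace X] [TopologicalSpace M] (g : X → M) : Prop :=
  ∀ K : Set X, IsCompact K → IsConnected K →
    (g '' K).Subsingleton ∨ ∃ x ∈ K, connectedComponentIn (g ⁻¹' {g x}) x ⊆ K

/-- A set contains an arc if there is a topological embedding of `[0,1]` with range in it. -/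
def ContainsArc {Y : Type*} [TopologicalSpace Y] (S : Set Y) : Prop :=
  ∃ e : unitInterval → Y, Continuous e ∧ Function.Injective e ∧ Set.range e ⊆ S

open Set Metric Function Filter Topology

section ArcLemma

variable {Y : Type*} [MetricSpace Y]

set_option linter.unusedSectionVars false

/-- Auxiliary: "good" subsets of `[0,1]` for a path `γ`. -/
def ArcGood (γ : ℝ → Y) (K : Set ℝ) : Prop :=
  IsClosed K ∧ K ⊆ Icc 0 1 ∧ (0:ℝ) ∈ K ∧ (1:ℝ) ∈ K ∧
    ∀ s ∈ K, ∀ t ∈ K, s < t → Ioo s t ∩ K = ∅ → γ s = γ t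

lemma arcGood_sInter (γ : ℝ → Y) (hγ : Continuous γ) {c : Set (Set ℝ)}
    (hc : ∀ K ∈ c, ArcGood γ K) (hchain : IsChain (· ⊆ ·) c) (hcne : c.Nonempty) :
    ArcGood γ (⋂₀ c) := by
  obtain ⟨K₁, hK₁⟩ := hcne
  refine ⟨isClosed_sInter fun K hK => (hc K hK).1,
    (sInter_subset_of_mem hK₁).trans (hc K₁ hK₁).2.1,
    fun K hK => (hc K hK).2.2.1, fun K hK => (hc K hK).2.2.2.1, ?_⟩
  intro s hs t ht hst hgap
  have key : ∀ n : ℕ, ∃ a b : ℝ, a ∈ Icc s (s + (t-s)/(n+3)) ∧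
      b ∈ Icc (t - (t-s)/(n+3)) t ∧ γ a = γ b := by
    intro n
    set d : ℝ := (t-s)/(n+3) with hd
    have hts : 0 < t - s := sub_pos.2 hst
    have hn3 : (0:ℝ) < (n:ℝ) + 3 := by positivity
    have hdpos : 0 < d := div_pos hts hn3
    have h3 : (3:ℝ) ≤ (n:ℝ) + 3 := by
      have : (0:ℝ) ≤ (n:ℝ) := Nat.cast_nonneg n
      linarith
    have hdn : d * ((n:ℝ)+3) = t - s := div_mul_cancel₀ _ (ne_of_gt hn3)
    have hdlt : s + d < t - d := by nlinarith
    have hcover : Icc (s+d) (t-d) ⊆ ⋃ K : c, (↑K : Set ℝ)ᶜ := by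
      intro x hx
      have hxIoo : x ∈ Ioo s t :=
        ⟨lt_of_lt_of_le (by linarith) hx.1, lt_of_le_of_lt hx.2 (by linarith)⟩
      by_contra hx'
      simp only [mem_iUnion, mem_compl_iff, not_exists, not_not] at hx'
      have hxK : x ∈ ⋂₀ c := fun K hK => hx' ⟨K, hK⟩
      exact (eq_empty_iff_forall_notMem.1 hgap x) ⟨hxIoo, hxK⟩
    have : Nonempty c := ⟨⟨K₁, hK₁⟩⟩
    obtain ⟨⟨K₀, hK₀c⟩, hK₀⟩ := isCompact_Icc.elim_directed_cover
      (fun K : c => ((K:Set ℝ))ᶜ) (fun K => ((hc _ K.2).1).isOpen_compl) hcover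
      (fun i j => by
        rcases hchain.total i.2 j.2 with h|h
        · exact ⟨i, subset_rfl, compl_subset_compl.2 h⟩
        · exact ⟨j, compl_subset_compl.2 h, subset_rfl⟩)
    have good₀ := hc K₀ hK₀c
    have hclosed₀ : IsClosed K₀ := good₀.1
    have hsub₀ : K₀ ⊆ Icc 0 1 := good₀.2.1
    have hsK₀ : s ∈ K₀ := hs K₀ hK₀c
    have htK₀ : t ∈ K₀ := ht K₀ hK₀c
    have hSa_ne : (K₀ ∩ Icc 0 (s+d)).Nonempty := ⟨s, hsK₀, (hsub₀ hsK₀).1, by linarith⟩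
    have hSa_bdd : BddAbove (K₀ ∩ Icc 0 (s+d)) := ⟨s+d, fun x hx => hx.2.2⟩
    have hSa_cl : IsClosed (K₀ ∩ Icc 0 (s+d)) := hclosed₀.inter isClosed_Icc
    set a := sSup (K₀ ∩ Icc 0 (s+d)) with hadef
    have hamem := hSa_cl.csSup_mem hSa_ne hSa_bdd
    have has : s ≤ a := le_csSup hSa_bdd ⟨hsK₀, (hsub₀ hsK₀).1, by linarith⟩
    have hSb_ne : (K₀ ∩ Icc (t-d) 1).Nonempty := ⟨t, htK₀, by linarith, (hsub₀ htK₀).2⟩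
    have hSb_bdd : BddBelow (K₀ ∩ Icc (t-d) 1) := ⟨t-d, fun x hx => hx.2.1⟩
    have hSb_cl : IsClosed (K₀ ∩ Icc (t-d) 1) := hclosed₀.inter isClosed_Icc
    set b := sInf (K₀ ∩ Icc (t-d) 1) with hbdef
    have hbmem := hSb_cl.csInf_mem hSb_ne hSb_bdd
    have hbt : b ≤ t := csInf_le hSb_bdd ⟨htK₀, by linarith, (hsub₀ htK₀).2⟩
    have hab : a < b := lt_of_le_of_lt hamem.2.2 (lt_of_lt_of_le hdlt hbmem.2.1)
    have hgap₀ : Ioo a b ∩ K₀ = ∅ := by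
      ext x
      simp only [mem_inter_iff, mem_Ioo, mem_empty_iff_false, iff_false, not_and]
      rintro ⟨hax, hxb⟩ hxK₀
      rcases le_or_gt x (s+d) with h|h
      · exact absurd (le_csSup hSa_bdd ⟨hxK₀, (hsub₀ hxK₀).1, h⟩) (not_le.2 hax)
      rcases le_or_gt (t-d) x with h'|h'
      · exact absurd (csInf_le hSb_bdd ⟨hxK₀, h', (hsub₀ hxK₀).2⟩) (not_le.2 hxb)
      · exact (hK₀ ⟨le_of_lt h, le_of_lt h'⟩) hxK₀
    exact ⟨a, b, ⟨has, hamem.2.2⟩, ⟨hbmem.2.1, hbt⟩,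
      good₀.2.2.2.2 a hamem.1 b hbmem.1 hab hgap₀⟩
  choose a b ha hb hab using key
  have hdlim : Tendsto (fun n : ℕ => (t-s)/((n:ℝ)+3)) atTop (𝓝 0) :=
    Tendsto.div_atTop tendsto_const_nhds
      (tendsto_atTop_add_const_right _ 3 tendsto_natCast_atTop_atTop)
  have hta : Tendsto a atTop (𝓝 s) := by
    have hupper : Tendsto (fun n : ℕ => s + (t-s)/((n:ℝ)+3)) atTop (𝓝 s) := by
      simpa using tendsto_const_nhds.add hdlim
    exact tendsto_of_tendsto_of_tendsto_of_le_of_le tendsto_const_nhds hupper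
      (fun n => (ha n).1) (fun n => (ha n).2)
  have htb : Tendsto b atTop (𝓝 t) := by
    have hlower : Tendsto (fun n : ℕ => t - (t-s)/((n:ℝ)+3)) atTop (𝓝 t) := by
      simpa using tendsto_const_nhds.sub hdlim
    exact tendsto_of_tendsto_of_tendsto_of_le_of_le hlower tendsto_const_nhds
      (fun n => (hb n).1) (fun n => (hb n).2)
  have h1 : Tendsto (fun n => γ (a n)) atTop (𝓝 (γ s)) := (hγ.tendsto s).comp hta
  have h2 : Tendsto (fun n => γ (a n)) atTop (𝓝 (γ t)) := by
    simp only [hab]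
    exact (hγ.tendsto t).comp htb
  exact tendsto_nhds_unique h1 h2

lemma exists_minimal_arcGood (γ : ℝ → Y) (hγ : Continuous γ) :
    ∃ K, ArcGood γ K ∧ ∀ K', ArcGood γ K' → K' ⊆ K → K' = K := by
  have hIcc : ArcGood γ (Icc 0 1) := by
    refine ⟨isClosed_Icc, subset_rfl, ⟨le_refl 0, zero_le_one⟩, ⟨zero_le_one, le_refl 1⟩, ?_⟩
    intro s hs t ht hst hgap
    exfalso
    exact (eq_empty_iff_forall_notMem.1 hgap ((s+t)/2))
      ⟨⟨by linarith, by linarith⟩, ⟨by linarith [hs.1, ht.1], by linarith [hs.2, ht.2]⟩⟩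
  obtain ⟨m, _hm_sub, hmin⟩ := zorn_superset_nonempty {K | ArcGood γ K}
    (fun c hcS hchain hcne =>
      ⟨⋂₀ c, arcGood_sInter γ hγ (fun K hK => hcS hK) hchain hcne,
        fun s hs => sInter_subset_of_mem hs⟩) _ hIcc
  exact ⟨m, hmin.1, fun K' h1 h2 => subset_antisymm h2 (hmin.2 h1 h2)⟩


/-- From minimality of a good set: equal values force gaps. -/
lemma minimal_arcGood_gap' (γ : ℝ → Y) (K : Set ℝ)
    (hKcl : IsClosed K) (hKsub : K ⊆ Icc 0 1) (hK0 : (0:ℝ) ∈ K) (hK1 : (1:ℝ) ∈ K)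
    (hKgap : ∀ s ∈ K, ∀ t ∈ K, s < t → Ioo s t ∩ K = ∅ → γ s = γ t)
    (hmin : ∀ K', (IsClosed K' ∧ K' ⊆ Icc 0 1 ∧ (0:ℝ) ∈ K' ∧ (1:ℝ) ∈ K' ∧
      ∀ s ∈ K', ∀ t ∈ K', s < t → Ioo s t ∩ K' = ∅ → γ s = γ t) → K' ⊆ K → K' = K) :
    ∀ s ∈ K, ∀ t ∈ K, s < t → γ s = γ t → Ioo s t ∩ K = ∅ := by
  intro s hs t ht hst heq
  have hsnot : s ∉ Ioo s t := fun h => lt_irrefl s h.1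
  have htnot : t ∉ Ioo s t := fun h => lt_irrefl t h.2
  have hgood : IsClosed (K \ Ioo s t) ∧ (K \ Ioo s t) ⊆ Icc 0 1 ∧
      (0:ℝ) ∈ K \ Ioo s t ∧ (1:ℝ) ∈ K \ Ioo s t ∧
      ∀ u ∈ K \ Ioo s t, ∀ v ∈ K \ Ioo s t, u < v → Ioo u v ∩ (K \ Ioo s t) = ∅ →
        γ u = γ v := by
    refine ⟨hKcl.inter (isOpen_Ioo.isClosed_compl), diff_subset.trans hKsub,
      ⟨hK0, fun h => absurd h.1 (not_lt.2 (hKsub hs).1)⟩,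
      ⟨hK1, fun h => absurd h.2 (not_lt.2 (hKsub ht).2)⟩, ?_⟩
    intro u hu v hv huv hgap2
    by_cases hKuv : Ioo u v ∩ K = ∅
    · exact hKgap u hu.1 v hv.1 huv hKuv
    · obtain ⟨w, hw1, hw2⟩ := nonempty_iff_ne_empty.2 hKuv
      have hwst : w ∈ Ioo s t := by
        by_contra hw
        exact (eq_empty_iff_forall_notMem.1 hgap2 w) ⟨hw1, hw2, hw⟩
      have hus : u = s := by
        have h1 : u ≤ s := by
          by_contra hc
          push_neg at hc
          exact hu.2 ⟨hc, lt_trans hw1.1 hwst.2⟩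
        rcases eq_or_lt_of_le h1 with h|h
        · exact h
        · exact absurd ⟨⟨h, lt_trans hwst.1 hw1.2⟩, hs, hsnot⟩
            (eq_empty_iff_forall_notMem.1 hgap2 s)
      have hvt : v = t := by
        have h1 : t ≤ v := by
          by_contra hc
          push_neg at hc
          exact hv.2 ⟨lt_trans hwst.1 hw1.2, hc⟩
        rcases eq_or_lt_of_le h1 with h|h
        · exact h.symm
        · exact absurd ⟨⟨lt_trans hw1.1 hwst.2, h⟩, ht, htnot⟩
            (eq_empty_iff_forall_notMem.1 hgap2 t)
      rw [hus, hvt]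
      exact heq
  have hKeq : K \ Ioo s t = K := hmin _ hgood diff_subset
  ext x
  simp only [mem_inter_iff, mem_empty_iff_false, iff_false, not_and]
  intro hx hxK
  rw [← hKeq] at hxK
  exact hxK.2 hx

/-- From a minimal good set we build a monotone-fibered reparametrized path. -/
lemma monoPath_of_minimal (γ : ℝ → Y) (hγ : Continuous γ) (K : Set ℝ)
    (hKcl : IsClosed K) (hKsub : K ⊆ Icc 0 1) (hK0 : (0:ℝ) ∈ K) (hK1 : (1:ℝ) ∈ K)
    (hKgap : ∀ s ∈ K, ∀ t ∈ K, s < t → Ioo s t ∩ K = ∅ → γ s = γ t)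
    (hgap' : ∀ s ∈ K, ∀ t ∈ K, s < t → γ s = γ t → Ioo s t ∩ K = ∅) :
    ∃ h : ℝ → Y, Continuous h ∧ h 0 = γ 0 ∧ h 1 = γ 1 ∧
      (∀ t, h t ∈ γ '' Icc 0 1) ∧
      ∀ s u t : ℝ, s ≤ u → u ≤ t → h s = h t → h u = h s := by
  classical
  set r : ℝ → ℝ := fun t => sSup (K ∩ Iic t) with hrdef
  have hbdd : ∀ t, BddAbove (K ∩ Iic t) := fun t => ⟨1, fun x hx => (hKsub hx.1).2⟩
  have hne : ∀ t, 0 ≤ t → (K ∩ Iic t).Nonempty := fun t ht => ⟨0, hK0, ht⟩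
  have hcl : ∀ t, IsClosed (K ∩ Iic t) := fun t => hKcl.inter isClosed_Iic
  have hrmem : ∀ t, r t ∈ K := by
    intro t
    rcases le_or_gt 0 t with h|h
    · exact ((hcl t).csSup_mem (hne t h) (hbdd t)).1
    · have : K ∩ Iic t = ∅ := by
        ext x
        simp only [mem_inter_iff, mem_Iic, mem_empty_iff_false, iff_false, not_and, not_le]
        intro hx
        exact lt_of_lt_of_le h (hKsub hx).1
      simp only [hrdef, this, Real.sSup_empty]
      exact hK0
  have hrle : ∀ t, 0 ≤ t → r t ≤ t := fun t ht =>
    csSup_le (hne t ht) (fun x hx => hx.2)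
  have hler : ∀ {m t : ℝ}, m ∈ K → m ≤ t → m ≤ r t := fun hm hmt =>
    le_csSup (hbdd _) ⟨hm, hmt⟩
  have hrself : ∀ t ∈ K, r t = t := fun t ht =>
    le_antisymm (hrle t (hKsub ht).1) (hler ht le_rfl)
  have hrmono : Monotone r := by
    intro x y hxy
    rcases le_or_gt 0 x with h|h
    · exact csSup_le_csSup (hbdd y) (hne x h) (inter_subset_inter_right _ (Iic_subset_Iic.2 hxy))
    · have : K ∩ Iic x = ∅ := by
        ext z
        simp only [mem_inter_iff, mem_Iic, mem_empty_iff_false, iff_false, not_and, not_le]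
        intro hz
        exact lt_of_lt_of_le h (hKsub hz).1
      have hx0 : r x = 0 := by simp [hrdef, this, Real.sSup_empty]
      rw [hx0]
      rcases le_or_gt 0 y with h'|h'
      · exact hler hK0 h'
      · have : K ∩ Iic y = ∅ := by
          ext z
          simp only [mem_inter_iff, mem_Iic, mem_empty_iff_false, iff_false, not_and, not_le]
          intro hz
          exact lt_of_lt_of_le h' (hKsub hz).1
        simp [hrdef, this, Real.sSup_empty]
  have hrmax : ∀ t, r (max t 0) = r t := by
    intro t
    rcases le_or_gt 0 t with h|h
    · rw [max_eq_left h]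
    · rw [max_eq_right h.le]
      have h1 : K ∩ Iic t = ∅ := by
        ext z
        simp only [mem_inter_iff, mem_Iic, mem_empty_iff_false, iff_false, not_and, not_le]
        intro hz
        exact lt_of_lt_of_le h (hKsub hz).1
      have h2 : r 0 = 0 := hrself 0 hK0
      rw [h2]
      simp [hrdef, h1, Real.sSup_empty]
  -- STEP
  have hstep : ∀ u v : ℝ, 0 ≤ u → u ≤ v →
      γ (r v) = γ (r u) ∨ ∃ w ∈ K, u ≤ w ∧ w ≤ v ∧ γ w = γ (r u) ∧ w ≤ r v := by
    intro u v hu huv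
    by_cases hS : (K ∩ Icc u v).Nonempty
    · right
      have hbb : BddBelow (K ∩ Icc u v) := ⟨u, fun x hx => hx.2.1⟩
      set w := sInf (K ∩ Icc u v) with hwdef
      have hwmem := (hKcl.inter isClosed_Icc).csInf_mem hS hbb
      have hwK : w ∈ K := hwmem.1
      have hwu : u ≤ w := hwmem.2.1
      have hwv : w ≤ v := hwmem.2.2
      refine ⟨w, hwK, hwu, hwv, ?_, hler hwK hwv⟩
      have hru : r u ≤ u := hrle u hu
      rcases eq_or_lt_of_le (le_trans hru hwu) with h|h
      · rw [← h]
      · have hgap : Ioo (r u) w ∩ K = ∅ := by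
          ext x
          simp only [mem_inter_iff, mem_Ioo, mem_empty_iff_false, iff_false, not_and]
          rintro ⟨h1, h2⟩ hxK
          rcases le_or_gt x u with h3|h3
          · exact absurd (hler hxK h3) (not_le.2 h1)
          · exact absurd (csInf_le hbb ⟨hxK, h3.le, le_trans h2.le hwv⟩)
              (not_le.2 h2)
        exact (hKgap (r u) (hrmem u) w hwK h hgap).symm
    · left
      have hrv : r v ≤ u := by
        by_contra hc
        push_neg at hc
        exact hS ⟨r v, hrmem v, hc.le, hrle v (le_trans hu huv)⟩
      have h1 : r v ≤ r u := hler (hrmem v) hrv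
      have h2 : r u ≤ r v := hrmono huv
      rw [le_antisymm h1 h2]
  set h : ℝ → Y := fun t => γ (r t) with hhdef
  have hclaim : ∀ ε > (0:ℝ), ∃ δ > (0:ℝ), ∀ u v : ℝ, 0 ≤ u → u ≤ v → v - u < δ →
      dist (h v) (h u) < ε := by
    intro ε hε
    have huc := isCompact_Icc.uniformContinuousOn_of_continuous
      (hγ.continuousOn : ContinuousOn γ (Icc (0:ℝ) 1))
    rw [Metric.uniformContinuousOn_iff] at huc
    obtain ⟨δ, hδ, hucd⟩ := huc ε hε
    refine ⟨δ, hδ, ?_⟩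
    intro u v hu huv hd
    rcases hstep u v hu huv with heq | ⟨w, hwK, hwu, hwv, hwγ, hwr⟩
    · show dist (γ (r v)) (γ (r u)) < ε
      rw [heq]
      simpa using hε
    · show dist (γ (r v)) (γ (r u)) < ε
      rw [← hwγ]
      have h1 : r v ∈ Icc (0:ℝ) 1 := hKsub (hrmem v)
      have h2 : w ∈ Icc (0:ℝ) 1 := hKsub hwK
      apply hucd _ h1 _ h2
      rw [Real.dist_eq, abs_of_nonneg (sub_nonneg.2 hwr)]
      have : r v ≤ v := hrle v (le_trans hu huv)
      linarith
  have hhmax : ∀ t, h (max t 0) = h t := fun t => by show γ (r (max t 0)) = γ (r t); rw [hrmax]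
  have hhcont : Continuous h := by
    rw [Metric.continuous_iff]
    intro t₀ ε hε
    obtain ⟨δ, hδ, hcl2⟩ := hclaim ε hε
    refine ⟨δ, hδ, ?_⟩
    intro a had
    rw [Real.dist_eq] at had
    rcases le_total a t₀ with hle|hle
    · rw [← hhmax a, ← hhmax t₀, dist_comm]
      have h1 : 0 ≤ max a 0 := le_max_right _ _
      have h2 : max a 0 ≤ max t₀ 0 := max_le_max hle le_rfl
      have h3 : max t₀ 0 - max a 0 < δ := by
        rcases le_or_gt t₀ 0 with h4|h4
        · rw [max_eq_right h4, max_eq_right (le_trans hle h4)]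
          simpa using hδ
        · rw [max_eq_left h4.le]
          have : a ≤ max a 0 := le_max_left _ _
          rw [abs_of_nonpos (by linarith)] at had
          linarith [le_max_left a 0]
      exact hcl2 _ _ h1 h2 h3
    · rw [← hhmax a, ← hhmax t₀]
      have h1 : 0 ≤ max t₀ 0 := le_max_right _ _
      have h2 : max t₀ 0 ≤ max a 0 := max_le_max hle le_rfl
      have h3 : max a 0 - max t₀ 0 < δ := by
        rcases le_or_gt a 0 with h4|h4
        · rw [max_eq_right h4, max_eq_right (le_trans hle h4)]
          simpa using hδ
        · rw [max_eq_left h4.le]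
          rw [abs_of_nonneg (by linarith)] at had
          linarith [le_max_left t₀ 0]
      exact hcl2 _ _ h1 h2 h3
  refine ⟨h, hhcont, by show γ (r 0) = γ 0; rw [hrself 0 hK0],
    by show γ (r 1) = γ 1; rw [hrself 1 hK1], fun t => ⟨r t, hKsub (hrmem t), rfl⟩, ?_⟩
  intro s u t hsu hut hst
  have h1 : r s ≤ r u := hrmono hsu
  have h2 : r u ≤ r t := hrmono hut
  rcases eq_or_lt_of_le (le_trans h1 h2) with h|h
  · have hru : r s = r u := le_antisymm h1 (h ▸ h2)
    show γ (r u) = γ (r s)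
    rw [hru]
  · have hgap : Ioo (r s) (r t) ∩ K = ∅ :=
      hgap' (r s) (hrmem s) (r t) (hrmem t) h hst
    have : r u = r s ∨ r u = r t := by
      rcases eq_or_lt_of_le h1 with h3|h3
      · exact Or.inl h3.symm
      rcases eq_or_lt_of_le h2 with h4|h4
      · exact Or.inr h4
      · exact absurd ⟨⟨h3, h4⟩, hrmem u⟩ (eq_empty_iff_forall_notMem.1 hgap (r u))
    rcases this with h5|h5
    · show γ (r u) = γ (r s)
      rw [h5]
    · show γ (r u) = γ (r s)
      rw [h5]
      exact hst.symm


lemma exists_arc_of_monoPath [TopologicalSpace.SeparableSpace Y]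
    (h : ℝ → Y) (hcont : Continuous h)
    (hstar : ∀ s u t : ℝ, s ≤ u → u ≤ t → h s = h t → h u = h s)
    (hne01 : h 0 ≠ h 1) :
    ∃ e : unitInterval → Y, Continuous e ∧ Injective e ∧ range e ⊆ h '' Icc 0 1 := by
  classical
  haveI : Nonempty Y := ⟨h 0⟩
  set y : ℕ → Y := TopologicalSpace.denseSeq Y with hy
  have hdense : DenseRange y := TopologicalSpace.denseRange_denseSeq Y
  set c : ℝ → ℝ := fun t => ((projIcc (0:ℝ) 1 zero_le_one t : Icc (0:ℝ) 1) : ℝ) with hc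
  have hcmem : ∀ t, c t ∈ Icc (0:ℝ) 1 := fun t => (projIcc (0:ℝ) 1 zero_le_one t).2
  have hceq : ∀ t, t ∈ Icc (0:ℝ) 1 → c t = t := by
    intro t ht
    simp only [hc]
    rw [projIcc_of_mem zero_le_one ht]
  have hcmono : Monotone c := fun a b hab =>
    Subtype.coe_le_coe.2 (monotone_projIcc zero_le_one hab)
  have hclip : ∀ a b : ℝ, dist (c a) (c b) ≤ dist a b := by
    intro a b
    have := (LipschitzWith.projIcc (zero_le_one : (0:ℝ) ≤ 1)).dist_le_mul a b
    rwa [Subtype.dist_eq, NNReal.coe_one, one_mul] at this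
  set A : ℝ → Set Y := fun t => h '' Icc 0 (c t) with hA
  have hAne : ∀ t, (A t).Nonempty := fun t => ⟨h 0, 0, ⟨le_rfl, (hcmem t).1⟩, rfl⟩
  have hAcp : ∀ t, IsCompact (A t) := fun t => isCompact_Icc.image hcont
  have hAmono : ∀ a b : ℝ, a ≤ b → A a ⊆ A b :=
    fun a b hab => image_mono (Icc_subset_Icc le_rfl (hcmono hab))
  have hmemA : ∀ t, h (c t) ∈ A t := fun t => ⟨c t, ⟨(hcmem t).1, le_rfl⟩, rfl⟩
  have hnew : ∀ s t : ℝ, s ∈ Icc (0:ℝ) 1 → t ∈ Icc (0:ℝ) 1 → s ≤ t → h s ≠ h t →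
      h t ∉ A s := by
    rintro s t hs ht hst hne ⟨x, hx, hxe⟩
    rw [hceq s hs] at hx
    exact hne ((hstar x s t hx.2 hst hxe).trans hxe)
  have hsame : ∀ s t : ℝ, s ∈ Icc (0:ℝ) 1 → t ∈ Icc (0:ℝ) 1 → s ≤ t → h s = h t →
      A s = A t := by
    intro s t hs ht hst heq
    apply subset_antisymm (hAmono s t hst)
    rintro z ⟨x, hx, rfl⟩
    rw [hceq t ht] at hx
    rcases le_or_gt x s with h'|h'
    · exact ⟨x, ⟨hx.1, by rw [hceq s hs]; exact h'⟩, rfl⟩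
    · exact ⟨s, ⟨hs.1, (hceq s hs).ge⟩, (hstar s x t h'.le hx.2 heq).symm⟩
  set g : ℕ → ℝ → ℝ := fun n t => min (infDist (y n) (A t)) 1 with hg
  have hganti : ∀ n, Antitone (g n) := fun n a b hab =>
    min_le_min (infDist_le_infDist_of_subset (hAmono a b hab) (hAne a)) le_rfl
  have hgnonneg : ∀ n t, 0 ≤ g n t := fun n t => le_min infDist_nonneg zero_le_one
  have hgle1 : ∀ n t, g n t ≤ 1 := fun n t => min_le_right _ _
  have hgcont : ∀ n, Continuous (g n) := by
    intro n
    apply Continuous.min ?_ continuous_const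
    rw [Metric.continuous_iff]
    intro t₀ ε hε
    have huc := isCompact_Icc.uniformContinuousOn_of_continuous
      (hcont.continuousOn : ContinuousOn h (Icc (0:ℝ) 1))
    rw [Metric.uniformContinuousOn_iff] at huc
    obtain ⟨δ, hδ, hucd⟩ := huc (ε/2) (by linarith)
    refine ⟨δ, hδ, ?_⟩
    intro a had
    have key : ∀ p q : ℝ, p ≤ q → dist p q < δ →
        infDist (y n) (A p) - infDist (y n) (A q) < ε := by
      intro p q hpq hd
      obtain ⟨z, hz, hze⟩ := (hAcp q).exists_infDist_eq_dist (hAne q) (y n)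
      obtain ⟨x, hx, rfl⟩ := hz
      rcases le_or_gt x (c p) with h'|h'
      · have h1 : infDist (y n) (A p) ≤ dist (y n) (h x) :=
          infDist_le_dist_of_mem ⟨x, ⟨hx.1, h'⟩, rfl⟩
        rw [← hze] at h1
        linarith
      · have hx1 : x ∈ Icc (0:ℝ) 1 := ⟨hx.1, le_trans hx.2 (hcmem q).2⟩
        have hd2 : dist x (c p) < δ := by
          rw [Real.dist_eq, abs_of_nonneg (sub_nonneg.2 h'.le)]
          have h3 : c q - c p ≤ dist p q := by
            have := hclip p q
            rw [Real.dist_eq] at this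
            exact le_trans (le_abs_self _) (by rwa [abs_sub_comm] at this)
          have h4 : x - c p ≤ c q - c p := by linarith [hx.2]
          linarith
        have h5 : dist (h x) (h (c p)) < ε/2 := hucd x hx1 (c p) (hcmem p) hd2
        have h6 : infDist (y n) (A p) ≤ dist (y n) (h (c p)) :=
          infDist_le_dist_of_mem (hmemA p)
        have h7 : dist (y n) (h (c p)) ≤ dist (y n) (h x) + dist (h x) (h (c p)) :=
          dist_triangle _ _ _
        rw [← hze] at h7
        linarith
    rcases le_total a t₀ with hle|hle
    · have h1 : infDist (y n) (A t₀) ≤ infDist (y n) (A a) :=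
        infDist_le_infDist_of_subset (hAmono _ _ hle) (hAne a)
      rw [Real.dist_eq, abs_of_nonneg (sub_nonneg.2 h1)]
      have := key a t₀ hle had
      linarith
    · have h1 : infDist (y n) (A a) ≤ infDist (y n) (A t₀) :=
        infDist_le_infDist_of_subset (hAmono _ _ hle) (hAne t₀)
      rw [Real.dist_eq, abs_of_nonpos (sub_nonpos.2 h1)]
      have := key t₀ a hle (by rwa [dist_comm])
      linarith
  set G : ℝ → ℝ := fun t => ∑' n, (1/2:ℝ)^n * g n t with hG
  have hsum : ∀ t, Summable (fun n => (1/2:ℝ)^n * g n t) := by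
    intro t
    apply Summable.of_nonneg_of_le (fun n => mul_nonneg (by positivity) (hgnonneg n t))
      (fun n => ?_) summable_geometric_two
    exact mul_le_of_le_one_right (by positivity) (hgle1 n t)
  have hGcont : Continuous G := by
    apply continuous_tsum (fun n => continuous_const.mul (hgcont n)) summable_geometric_two
    intro n t
    simp only [Pi.mul_apply]
    rw [Real.norm_eq_abs, abs_of_nonneg (mul_nonneg (by positivity) (hgnonneg n t))]
    exact mul_le_of_le_one_right (by positivity) (hgle1 n t)
  have hGanti : Antitone G := fun a b hab =>
    Summable.tsum_le_tsum (fun n => mul_le_mul_of_nonneg_left (hganti n hab) (by positivity))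
      (hsum b) (hsum a)
  have hGfib1 : ∀ s t : ℝ, s ∈ Icc (0:ℝ) 1 → t ∈ Icc (0:ℝ) 1 → s ≤ t → h s = h t →
      G s = G t := by
    intro s t hs ht hst heq
    have hAe : A s = A t := hsame s t hs ht hst heq
    simp only [hG, hg, hAe]
  have hGfib2 : ∀ s t : ℝ, s ∈ Icc (0:ℝ) 1 → t ∈ Icc (0:ℝ) 1 → s < t → h s ≠ h t →
      G t < G s := by
    intro s t hs ht hst hne
    have hts : h t ∉ A s := hnew s t hs ht hst.le hne
    have hd : 0 < infDist (h t) (A s) := by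
      rcases eq_or_lt_of_le (infDist_nonneg : (0:ℝ) ≤ infDist (h t) (A s)) with h'|h'
      · exact absurd ((((hAcp s).isClosed).mem_iff_infDist_zero (hAne s)).2 h'.symm) hts
      · exact h'
    set d := min (infDist (h t) (A s)) 1 with hdm
    have hd2 : 0 < d := lt_min hd one_pos
    obtain ⟨n, hn⟩ := Metric.denseRange_iff.1 hdense (h t) (d/2) (by linarith)
    have hAt : h t ∈ A t := by
      have := hmemA t
      rwa [hceq t ht] at this
    have hgt : g n t < d/2 := by
      calc g n t ≤ infDist (y n) (A t) := min_le_left _ _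
        _ ≤ dist (y n) (h t) := infDist_le_dist_of_mem hAt
        _ = dist (h t) (y n) := dist_comm _ _
        _ < d/2 := hn
    have hgs : d/2 ≤ g n s := by
      have h1 : infDist (h t) (A s) ≤ infDist (y n) (A s) + dist (h t) (y n) :=
        infDist_le_infDist_add_dist
      have h2 : d/2 ≤ infDist (y n) (A s) := by
        have h3 : d ≤ infDist (h t) (A s) := min_le_left _ _
        linarith
      have h3 : d/2 ≤ 1 := by
        have : d ≤ 1 := min_le_right _ _
        linarith
      exact le_min h2 h3
    exact Summable.tsum_lt_tsum
      (fun m => mul_le_mul_of_nonneg_left (hganti m hst.le) (by positivity))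
      (mul_lt_mul_of_pos_left (lt_of_lt_of_le hgt hgs) (by positivity))
      (hsum t) (hsum s)
  have hG10 : G 1 < G 0 := hGfib2 0 1 ⟨le_rfl, zero_le_one⟩ ⟨zero_le_one, le_rfl⟩
    one_pos hne01
  have hDpos : 0 < G 0 - G 1 := sub_pos.2 hG10
  set F : ℝ → ℝ := fun t => (G 0 - G t) / (G 0 - G 1) with hF
  have hFcont : Continuous F := (continuous_const.sub hGcont).div_const _
  have hF0 : F 0 = 0 := by simp [hF]
  have hF1 : F 1 = 1 := by
    simp only [hF]
    exact div_self (ne_of_gt hDpos)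
  have hFmem : ∀ t ∈ Icc (0:ℝ) 1, F t ∈ Icc (0:ℝ) 1 := by
    intro t ht
    constructor
    · exact div_nonneg (sub_nonneg.2 (hGanti ht.1)) hDpos.le
    · rw [div_le_one hDpos]
      have := hGanti ht.2
      linarith
  have hFsurj : ∀ z ∈ Icc (0:ℝ) 1, ∃ x ∈ Icc (0:ℝ) 1, F x = z := by
    intro z hz
    have hIV := intermediate_value_Icc (zero_le_one) hFcont.continuousOn
    rw [hF0, hF1] at hIV
    obtain ⟨x, hx, hxe⟩ := hIV hz
    exact ⟨x, hx, hxe⟩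
  have hFinj : ∀ s t : ℝ, s ∈ Icc (0:ℝ) 1 → t ∈ Icc (0:ℝ) 1 → F s = F t → h s = h t := by
    intro s t hs ht hFe
    have hGe : G s = G t := by
      have h1 : F s * (G 0 - G 1) = F t * (G 0 - G 1) := by rw [hFe]
      simp only [hF] at h1
      rw [div_mul_cancel₀ _ (ne_of_gt hDpos), div_mul_cancel₀ _ (ne_of_gt hDpos)] at h1
      linarith
    by_contra hc
    rcases lt_trichotomy s t with h'|h'|h'
    · exact absurd hGe (ne_of_gt (hGfib2 s t hs ht h' hc))
    · exact hc (h' ▸ rfl)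
    · exact absurd hGe (ne_of_lt (hGfib2 t s ht hs h' (fun hh => hc hh.symm)))
  set e : unitInterval → Y := fun z => h (invFunOn F (Icc (0:ℝ) 1) (z:ℝ)) with he
  have hwp : ∀ z : unitInterval, invFunOn F (Icc (0:ℝ) 1) (z:ℝ) ∈ Icc (0:ℝ) 1 ∧
      F (invFunOn F (Icc (0:ℝ) 1) (z:ℝ)) = (z:ℝ) := by
    intro z
    obtain ⟨x, hx, hxe⟩ := hFsurj z z.2
    exact ⟨invFunOn_mem ⟨x, hx, hxe⟩, invFunOn_eq ⟨x, hx, hxe⟩⟩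
  have hcompat : ∀ s ∈ Icc (0:ℝ) 1, e (projIcc (0:ℝ) 1 zero_le_one (F s)) = h s := by
    intro s hs
    have hmem := hFmem s hs
    have hcoe : ((projIcc (0:ℝ) 1 zero_le_one (F s) : Icc (0:ℝ) 1) : ℝ) = F s := by
      rw [projIcc_of_mem zero_le_one hmem]
    show h (invFunOn F (Icc (0:ℝ) 1) _) = h s
    obtain ⟨hw1, hw2⟩ := hwp (projIcc (0:ℝ) 1 zero_le_one (F s))
    exact hFinj _ s hw1 hs (by rw [hw2, hcoe])
  have hecont : Continuous e := by
    rw [continuous_iff_isClosed]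
    intro C hC
    have hset : e ⁻¹' C =
        (fun s : ℝ => projIcc (0:ℝ) 1 zero_le_one (F s)) '' (h ⁻¹' C ∩ Icc 0 1) := by
      ext z
      constructor
      · intro hz
        obtain ⟨hw1, hw2⟩ := hwp z
        refine ⟨invFunOn F (Icc (0:ℝ) 1) (z:ℝ), ⟨hz, hw1⟩, ?_⟩
        apply Subtype.ext
        show ((projIcc (0:ℝ) 1 zero_le_one (F (invFunOn F (Icc (0:ℝ) 1) (z:ℝ)))) : ℝ) = (z:ℝ)
        rw [hw2, projIcc_of_mem zero_le_one z.2]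
      · rintro ⟨s, ⟨hsC, hs⟩, rfl⟩
        show e _ ∈ C
        rw [hcompat s hs]
        exact hsC
    rw [hset]
    have hcl : IsClosed (h ⁻¹' C ∩ Icc 0 1) := (hC.preimage hcont).inter isClosed_Icc
    have hcp : IsCompact (h ⁻¹' C ∩ Icc 0 1) :=
      isCompact_Icc.of_isClosed_subset hcl inter_subset_right
    exact (hcp.image (continuous_projIcc.comp hFcont)).isClosed
  have heinj : Injective e := by
    intro z z' hzz
    obtain ⟨hw1, hw2⟩ := hwp z
    obtain ⟨hw1', hw2'⟩ := hwp z'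
    have hh : h (invFunOn F (Icc (0:ℝ) 1) (z:ℝ)) = h (invFunOn F (Icc (0:ℝ) 1) (z':ℝ)) := hzz
    have hGe : G (invFunOn F (Icc (0:ℝ) 1) (z:ℝ)) = G (invFunOn F (Icc (0:ℝ) 1) (z':ℝ)) := by
      rcases le_total (invFunOn F (Icc (0:ℝ) 1) (z:ℝ)) (invFunOn F (Icc (0:ℝ) 1) (z':ℝ)) with h'|h'
      · exact hGfib1 _ _ hw1 hw1' h' hh
      · exact (hGfib1 _ _ hw1' hw1 h' hh.symm).symm
    apply Subtype.ext
    rw [← hw2, ← hw2']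
    simp only [hF]
    rw [hGe]
  refine ⟨e, hecont, heinj, ?_⟩
  rintro _ ⟨z, rfl⟩
  exact ⟨invFunOn F (Icc (0:ℝ) 1) (z:ℝ), (hwp z).1, rfl⟩


lemma exists_arc [TopologicalSpace.SeparableSpace Y]
    (γ : ℝ → Y) (hγ : Continuous γ) (hne : γ 0 ≠ γ 1) :
    ∃ e : unitInterval → Y, Continuous e ∧ Injective e ∧ range e ⊆ γ '' Icc 0 1 := by
  obtain ⟨K, hK, hmin⟩ := exists_minimal_arcGood γ hγ
  obtain ⟨hKcl, hKsub, hK0, hK1, hKgap⟩ := hK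
  have hgap' := minimal_arcGood_gap' γ K hKcl hKsub hK0 hK1 hKgap
    (fun K' h1 h2 => hmin K' h1 h2)
  obtain ⟨h, hcont, h0, h1, hrange, hstar⟩ :=
    monoPath_of_minimal γ hγ K hKcl hKsub hK0 hK1 hKgap hgap'
  obtain ⟨e, he1, he2, he3⟩ := exists_arc_of_monoPath h hcont hstar
    (by rw [h0, h1]; exact hne)
  refine ⟨e, he1, he2, he3.trans ?_⟩
  rintro z ⟨x, hx, rfl⟩
  exact hrange x

end ArcLemma

theorem stmt_9 {Y : Type*} [MetricSpace Y] [CompactSpace Y] [ConnectedSpace Y] [Nontrivial Y]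
    (U : Set Y) (hUopen : IsOpen U) (hnoarc : ¬ ContainsArc U)
    (L : Set Y) (hLU : L ⊆ U) (hLcomp : IsCompact L) (hLconn : IsConnected L)
    (hLnd : L.Nontrivial)
    (δ ε : ℝ) (hδ : δ = Metric.diam L)
    (hε : ε = min (δ / 2) (sInf {r : ℝ | ∃ a ∈ L, ∃ b ∈ Uᶜ, r = dist a b}))
    (q : Y × unitInterval → Y) (hq : Continuous q)
    (hclose : ∀ p : Y × unitInterval, dist (q p) p.1 < ε) :
    ¬ IsKrasMap q := by
  intro hKras
  have hLne : L.Nonempty := hLnd.nonempty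
  obtain ⟨p₁, hp₁, p₂, hp₂, hp12⟩ := hLnd
  obtain ⟨ab, habmem, habmax⟩ := (hLcomp.prod hLcomp).exists_isMaxOn (hLne.prod hLne)
    (continuous_dist.continuousOn : ContinuousOn (fun p : Y × Y => dist p.1 p.2) _)
  have hdd : dist ab.1 ab.2 = δ := by
    rw [hδ]
    apply le_antisymm (Metric.dist_le_diam_of_mem hLcomp.isBounded habmem.1 habmem.2)
    apply Metric.diam_le_of_forall_dist_le dist_nonneg
    intro x hx z hz
    exact habmax (Set.mk_mem_prod hx hz)
  have hδpos : 0 < δ := by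
    rw [hδ]
    exact lt_of_lt_of_le (dist_pos.2 hp12)
      (Metric.dist_le_diam_of_mem hLcomp.isBounded hp₁ hp₂)
  have hεδ : ε ≤ δ/2 := by rw [hε]; exact min_le_left _ _
  have hεdist : ∀ a' ∈ L, ∀ b' ∈ Uᶜ, ε ≤ dist a' b' := by
    intro a' ha' b' hb'
    rw [hε]
    refine le_trans (min_le_right _ _) (csInf_le ⟨0, ?_⟩ ⟨a', ha', b', hb', rfl⟩)
    rintro r ⟨x, hx, z, hz, rfl⟩
    exact dist_nonneg
  have hqU : ∀ y ∈ L, ∀ t : unitInterval, q (y, t) ∈ U := by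
    intro y hy t
    by_contra hqb
    have h1 : ε ≤ dist y (q (y, t)) := hεdist y hy (q (y, t)) hqb
    have h2 : dist (q (y, t)) y < ε := hclose (y, t)
    rw [dist_comm] at h2
    linarith
  have hvert : ∀ y ∈ L, ∀ t : unitInterval, q (y, t) = q (y, 0) := by
    intro y hy t
    by_contra hne'
    have hγcont : Continuous (fun s : ℝ => q (y, projIcc 0 1 zero_le_one (s * (t:ℝ)))) :=
      hq.comp (continuous_const.prodMk
        (continuous_projIcc.comp (continuous_id.mul continuous_const)))
    have hγ0 : (fun s : ℝ => q (y, projIcc 0 1 zero_le_one (s * (t:ℝ)))) 0 = q (y, 0) := by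
      show q (y, projIcc 0 1 zero_le_one (0 * (t:ℝ))) = q (y, 0)
      rw [zero_mul, projIcc_left]
      rfl
    have hγ1 : (fun s : ℝ => q (y, projIcc 0 1 zero_le_one (s * (t:ℝ)))) 1 = q (y, t) := by
      show q (y, projIcc 0 1 zero_le_one (1 * (t:ℝ))) = q (y, t)
      rw [one_mul, projIcc_of_mem zero_le_one t.2]
    have hne2 : (fun s : ℝ => q (y, projIcc 0 1 zero_le_one (s * (t:ℝ)))) 0 ≠
        (fun s : ℝ => q (y, projIcc 0 1 zero_le_one (s * (t:ℝ)))) 1 := by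
      rw [hγ0, hγ1]
      exact fun hh => hne' hh.symm
    obtain ⟨e, he1, he2, he3⟩ := exists_arc _ hγcont hne2
    apply hnoarc
    refine ⟨e, he1, he2, he3.trans ?_⟩
    rintro z ⟨x, hx, rfl⟩
    exact hqU y hy _
  rcases hKras (L ×ˢ ({0} : Set unitInterval)) (hLcomp.prod isCompact_singleton)
    (hLconn.prod isConnected_singleton) with hsub | ⟨x, hxK, hcomp⟩
  · have h1 : q (ab.1, 0) ∈ q '' (L ×ˢ ({0} : Set unitInterval)) :=
      ⟨(ab.1, 0), Set.mk_mem_prod habmem.1 rfl, rfl⟩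
    have h2 : q (ab.2, 0) ∈ q '' (L ×ˢ ({0} : Set unitInterval)) :=
      ⟨(ab.2, 0), Set.mk_mem_prod habmem.2 rfl, rfl⟩
    have heq := hsub h1 h2
    have h3 : dist ab.1 ab.2 ≤ dist ab.1 (q (ab.1, 0)) + dist (q (ab.1, 0)) (q (ab.2, 0)) +
        dist (q (ab.2, 0)) ab.2 := dist_triangle4 _ _ _ _
    have h4 : dist (q (ab.1, 0)) (q (ab.2, 0)) = 0 := by rw [heq, dist_self]
    have d1 : dist ab.1 (q (ab.1, 0)) < ε := by
      rw [dist_comm]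
      exact hclose (ab.1, 0)
    have d2 : dist (q (ab.2, 0)) ab.2 < ε := hclose (ab.2, 0)
    linarith
  · have hx1 : x.1 ∈ L := hxK.1
    have hx2 : x.2 = 0 := hxK.2
    have hqx : q x = q (x.1, 0) := by
      conv_lhs => rw [← Prod.mk.eta (p := x), hx2]
    have hseg : ({x.1} ×ˢ (univ : Set unitInterval)) ⊆ q ⁻¹' {q x} := by
      rintro ⟨y', t'⟩ ⟨hy', -⟩
      simp only [mem_singleton_iff] at hy'
      subst hy'
      simp only [Set.mem_preimage, mem_singleton_iff]
      rw [hvert x.1 hx1 t', hqx]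
    have hsub2 : ({x.1} ×ˢ (univ : Set unitInterval)) ⊆
        connectedComponentIn (q ⁻¹' {q x}) x := by
      apply (isPreconnected_singleton.prod isPreconnected_univ).subset_connectedComponentIn
        ?_ hseg
      rw [← Prod.mk.eta (p := x)]
      exact Set.mk_mem_prod rfl (mem_univ _)
    have hbad := hcomp (hsub2 (Set.mk_mem_prod rfl (mem_univ (1 : unitInterval))))
    have h01 : (1 : unitInterval) = 0 := hbad.2
    have := congrArg Subtype.val h01
    norm_num at this
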